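/- Fix an integer N ≥ 6 and rationals λ₁, λ₂ ∈ (1 − 1/N, 1]. Let m, q be positive integers with 1 ≤ q ≤ m, and suppose that (1 + q)/m − λ₁/m − λ₂·q/m − 1 ≥ −1 + 1/N. Then λ₁ + λ₂ ≤ 2 − 1/N. -/

import Mathlib

theorem stmt2 (N : ℤ) (hN : 6 ≤ N) (l₁ l₂ : ℚ)
    (hl₁ : 1 - 1 / N < l₁ ∧ l₁ ≤ 1) (hl₂ : 1 - 1 / N < l₂ ∧ l₂ ≤ 1)
    (m q : ℕ) (hm : 0 < m) (hq : 1 ≤ q) (hqm : q ≤ m)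
    (hdiscr : (-1 : ℚ) + 1 / N ≤ (1 + q) / m - l₁ / m - l₂ * q / m - 1) :
    l₁ + l₂ ≤ 2 - 1 / N := by
  obtain ⟨h1, h1'⟩ := hl₁
  obtain ⟨h2, h2'⟩ := hl₂
  have hNQ : (0:ℚ) < (N:ℚ) := by exact_mod_cast lt_of_lt_of_le (by norm_num) hN
  have hmQ : (0:ℚ) < (m:ℚ) := by exact_mod_cast hm
  have hqQ : (1:ℚ) ≤ (q:ℚ) := by exact_mod_cast hq
  have hqmQ : (q:ℚ) ≤ (m:ℚ) := by exact_mod_cast hqm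
  have hNinv : (0:ℚ) < 1/(N:ℚ) := by positivity
  have hm0 : (m:ℚ) ≠ 0 := hmQ.ne'
  have hb : (1 - l₂) * N < 1 := by
    rw [← lt_div_iff₀ hNQ]; linarith
  have key : (m:ℚ) ≤ ((1 - l₁) + q * (1 - l₂)) * N := by
    have h := mul_le_mul_of_nonneg_right hdiscr hmQ.le
    field_simp at h
    nlinarith [h]
  have goal : (1:ℚ) ≤ ((1 - l₁) + (1 - l₂)) * N := by
    nlinarith [mul_nonneg (sub_nonneg.2 hqQ) (sub_nonneg.2 hb.le), key]
  have : 1/(N:ℚ) ≤ 2 - l₁ - l₂ := by rw [div_le_iff₀ hNQ]; linarith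
  linarith
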